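/- The linearity space of the cone of balanced games equals the space of modular games: a game m is such that both m and −m are balanced if and only if m is modular (m(C∪D)+m(C∩D)=m(C)+m(D) for all C,D ⊆ N). -/

import Mathlib

open Finset

variable {ι : Type*} [DecidableEq ι] [Fintype ι]

/-- The core of a game `m` on the player set `ι`. -/
def core (m : Finset ι → ℝ) : Set (ι → ℝ) :=
  {x | ∑ i, x i = m Finset.univ ∧ ∀ S : Finset ι, m S ≤ ∑ i ∈ S, x i}

theorem stmt10 (m : Finset ι → ℝ) (h0 : m ∅ = 0) :
    ((core m).Nonempty ∧ (core (fun S => -(m S))).Nonempty) ↔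
      ∀ C D : Finset ι, m (C ∪ D) + m (C ∩ D) = m C + m D := by
  constructor
  · rintro ⟨⟨x, hx1, hx2⟩, ⟨y, hy1, hy2⟩⟩
    have key : ∀ S : Finset ι, ∑ i ∈ S, x i = m S := by
      intro S
      have h1 := hx2 S
      have h2 := hy2 S
      have h1c := hx2 Sᶜ
      have h2c := hy2 Sᶜ
      have hsx : ∑ i ∈ S, x i + ∑ i ∈ Sᶜ, x i = m Finset.univ := by
        rw [Finset.sum_add_sum_compl]; exact hx1
      have hsy : ∑ i ∈ S, y i + ∑ i ∈ Sᶜ, y i = -(m Finset.univ) := by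
        rw [Finset.sum_add_sum_compl]; exact hy1
      simp only at h2 h2c
      linarith
    intro C D
    rw [← key, ← key, ← key, ← key, Finset.sum_union_inter]
  · intro hmod
    have key : ∀ S : Finset ι, m S = ∑ i ∈ S, m {i} := by
      intro S
      induction S using Finset.induction_on with
      | empty => simpa using h0
      | @insert a S ha ih =>
        have := hmod {a} S
        rw [Finset.singleton_inter_of_notMem ha, h0] at this
        rw [Finset.sum_insert ha, ← ih, ← this]
        simp [Finset.insert_eq, -Finset.singleton_union]
    refine ⟨⟨fun i => m {i}, (key _).symm, fun S => le_of_eq (key S)⟩,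
      ⟨fun i => -(m {i}), ?_, fun S => ?_⟩⟩
    · simp [← Finset.sum_neg_distrib, key Finset.univ]
    · rw [Finset.sum_neg_distrib, ← key S]
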